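/- Let a > -1, a' > -1, b > 0, b' > 0, γ̄_E > 0 and R_t > 1 be real numbers, and set R̄_t = R_t − 1. Let f_E be the SNR density with parameters (a', b', γ̄_E), and for γ̄_B > 0 define the secrecy outage probability P_sop(γ̄_B) = ∫₀^∞ [ γ(a+1, √(y·R_t + R̄_t)/(b·√γ̄_B)) / Γ(a+1) ] · f_E(y) dy. Then the integral C = (1/Γ(a+2)) · ∫₀^∞ (y·R_t + R̄_t)^{(a+1)/2} · f_E(y) dy is finite, and (b²·γ̄_B)^{(a+1)/2} · P_sop(γ̄_B) → C as γ̄_B → ∞. In particular, the SOP decays like γ̄_B^{−(a+1)/2} in the high-SNR regime. (Precise form of the asymptotic SOP, Proposition 1.) -/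

import Mathlib

open MeasureTheory Real Set Filter

/-- The lower incomplete gamma function γ(s, x) = ∫₀^x t^{s-1} e^{-t} dt. -/
noncomputable def lowerGamma (s x : ℝ) : ℝ := ∫ t in (0:ℝ)..x, t ^ (s - 1) * Real.exp (-t)

/-- The SNR density with parameters (a, b, γ̄). -/
noncomputable def snrDensity (a b γbar γ : ℝ) : ℝ :=
  γ ^ ((a - 1) / 2) * Real.exp (-(Real.sqrt γ / (b * Real.sqrt γbar))) /
    (2 * γbar ^ ((a + 1) / 2) * b ^ (a + 1) * Real.Gamma (a + 1))

private lemma lg_intable {s : ℝ} (hs : 0 < s) (x y : ℝ) :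
    IntervalIntegrable (fun t : ℝ => t ^ (s - 1) * Real.exp (-t)) volume x y :=
  (intervalIntegral.intervalIntegrable_rpow' (by linarith)).mul_continuousOn
    (Continuous.continuousOn (by continuity))

private lemma lg_nonneg {s : ℝ} (hx : (0:ℝ) ≤ x) : 0 ≤ lowerGamma s x :=
  intervalIntegral.integral_nonneg hx fun t ht =>
    mul_nonneg (Real.rpow_nonneg ht.1 _) (Real.exp_pos _).le

private lemma lg_rpow_int {s : ℝ} (hs : 0 < s) {x : ℝ} :
    ∫ t in (0:ℝ)..x, t ^ (s - 1) = x ^ s / s := by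
  rw [integral_rpow (Or.inl (by linarith))]
  rw [show s - 1 + 1 = s by ring, Real.zero_rpow hs.ne', sub_zero]

private lemma lg_le {s : ℝ} (hs : 0 < s) {x : ℝ} (hx : 0 ≤ x) :
    lowerGamma s x ≤ x ^ s / s := by
  have h1 : lowerGamma s x ≤ ∫ t in (0:ℝ)..x, t ^ (s - 1) := by
    refine intervalIntegral.integral_mono_on hx (lg_intable hs 0 x)
      (intervalIntegral.intervalIntegrable_rpow' (by linarith)) fun t ht => ?_
    have h2 : Real.exp (-t) ≤ 1 := by
      rw [show (1:ℝ) = Real.exp 0 by rw [Real.exp_zero]]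
      exact Real.exp_le_exp.mpr (by linarith [ht.1])
    exact mul_le_of_le_one_right (Real.rpow_nonneg ht.1 _) h2
  rw [lg_rpow_int hs] at h1
  exact h1

private lemma lg_ge {s : ℝ} (hs : 0 < s) {x : ℝ} (hx : 0 ≤ x) :
    Real.exp (-x) * (x ^ s / s) ≤ lowerGamma s x := by
  have h1 : (∫ t in (0:ℝ)..x, Real.exp (-x) * t ^ (s - 1)) ≤ lowerGamma s x := by
    refine intervalIntegral.integral_mono_on hx
      ((intervalIntegral.intervalIntegrable_rpow' (by linarith)).const_mul _)
      (lg_intable hs 0 x) fun t ht => ?_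
    rw [mul_comm]
    exact mul_le_mul_of_nonneg_left (Real.exp_le_exp.mpr (neg_le_neg ht.2))
      (Real.rpow_nonneg ht.1 _)
  rw [intervalIntegral.integral_const_mul, lg_rpow_int hs] at h1
  exact h1

private lemma lg_mono {s : ℝ} (hs : 0 < s) : MonotoneOn (lowerGamma s) (Ici 0) := by
  intro x hx y hy hxy
  have hadd := intervalIntegral.integral_add_adjacent_intervals
    (lg_intable hs 0 x) (lg_intable hs x y)
  have h0 : 0 ≤ ∫ t in x..y, t ^ (s - 1) * Real.exp (-t) :=
    intervalIntegral.integral_nonneg hxy fun t ht =>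
      mul_nonneg (Real.rpow_nonneg (le_trans hx ht.1) _) (Real.exp_pos _).le
  unfold lowerGamma
  linarith

private lemma aux1 {r c : ℝ} (hr : -1 < r) (hc : 0 < c) :
    IntegrableOn (fun y : ℝ => y ^ r * Real.exp (-(Real.sqrt y / c))) (Ioi (0:ℝ)) := by
  rw [← integrableOn_Ioi_comp_rpow_iff'
    (fun y : ℝ => y ^ r * Real.exp (-(Real.sqrt y / c))) (two_ne_zero (α := ℝ))]
  have hbase : IntegrableOn (fun x : ℝ => x ^ (2*r+1) * Real.exp (-(1/c) * x)) (Ioi 0) := by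
    have h := integrableOn_rpow_mul_exp_neg_mul_rpow (s := 2*r+1) (p := 1) (b := 1/c)
      (by linarith) one_pos (by positivity)
    exact h.congr_fun (fun x _ => by beta_reduce; rw [Real.rpow_one]) measurableSet_Ioi
  refine hbase.congr_fun (fun x hx => ?_) measurableSet_Ioi
  have hx0 : (0:ℝ) < x := hx
  have h1 : Real.sqrt (x ^ (2:ℝ)) = x := by
    rw [show (2:ℝ) = ((2:ℕ):ℝ) by norm_num, Real.rpow_natCast, Real.sqrt_sq hx0.le]
  have h2 : (x ^ (2:ℝ)) ^ r = x ^ (2*r) := by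
    rw [← Real.rpow_mul hx0.le]
  rw [smul_eq_mul, h1, h2, show (2:ℝ) - 1 = 1 by norm_num, Real.rpow_one]
  have h3 : x ^ (2*r+1) = x ^ (2*r) * x := by
    rw [Real.rpow_add hx0, Real.rpow_one]
  beta_reduce
  rw [h3, show -(1/c) * x = -(x/c) by ring]
  ring

private lemma e1lem {b u s : ℝ} (hb : 0 < b) (hu : 0 < u) :
    (b ^ 2 * u) ^ (s/2) = (b * Real.sqrt u) ^ s := by
  have hbu : (0:ℝ) < b * Real.sqrt u := by positivity
  rw [show b ^ 2 * u = (b * Real.sqrt u) ^ (2:ℕ) by rw [mul_pow, Real.sq_sqrt hu.le],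
    ← Real.rpow_natCast (b * Real.sqrt u) 2, ← Real.rpow_mul hbu.le,
    show ((2:ℕ):ℝ) * (s/2) = s by push_cast; ring]

private lemma keylem {s γt bu : ℝ} (hs : 0 < s) (hγt : 0 < γt) (hbu : 0 < bu) :
    bu ^ s * lowerGamma s (Real.sqrt γt / bu) ≤ γt ^ (s/2) / s ∧
    Real.exp (-(Real.sqrt γt / bu)) * (γt ^ (s/2) / s)
      ≤ bu ^ s * lowerGamma s (Real.sqrt γt / bu) := by
  have hX0 : (0:ℝ) ≤ Real.sqrt γt / bu := by positivity
  have e3 : bu ^ s * (Real.sqrt γt / bu) ^ s = γt ^ (s/2) := by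
    rw [← Real.mul_rpow hbu.le hX0, mul_comm, div_mul_cancel₀ _ hbu.ne',
      Real.sqrt_eq_rpow, ← Real.rpow_mul hγt.le, show 1/2 * s = s/2 by ring]
  constructor
  · calc bu ^ s * lowerGamma s (Real.sqrt γt / bu)
        ≤ bu ^ s * ((Real.sqrt γt / bu) ^ s / s) :=
          mul_le_mul_of_nonneg_left (lg_le hs hX0) (Real.rpow_nonneg hbu.le s)
      _ = bu ^ s * (Real.sqrt γt / bu) ^ s / s := by ring
      _ = γt ^ (s/2) / s := by rw [e3]
  · calc Real.exp (-(Real.sqrt γt / bu)) * (γt ^ (s/2) / s)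
        = bu ^ s * (Real.exp (-(Real.sqrt γt / bu)) * ((Real.sqrt γt / bu) ^ s / s)) := by
          rw [← e3]; ring
      _ ≤ bu ^ s * lowerGamma s (Real.sqrt γt / bu) :=
          mul_le_mul_of_nonneg_left (lg_ge hs hX0) (Real.rpow_nonneg hbu.le s)

/-- Proposition 1, precise form: the SOP decays like
γ̄_B^{−(a+1)/2}: (b²γ̄_B)^{(a+1)/2} · P_sop(γ̄_B) → C as γ̄_B → ∞, where
C = (1/Γ(a+2)) ∫₀^∞ (y R_t + R̄_t)^{(a+1)/2} f_E(y) dy is finite. -/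
theorem stmt10 (a a' b b' γbarE Rt : ℝ)
    (ha : -1 < a) (ha' : -1 < a') (hb : 0 < b) (hb' : 0 < b')
    (hγE : 0 < γbarE) (hRt : 1 < Rt) :
    IntegrableOn
      (fun y => (y * Rt + (Rt - 1)) ^ ((a + 1) / 2) * snrDensity a' b' γbarE y)
      (Ioi (0:ℝ)) ∧
    Tendsto
      (fun γbarB : ℝ =>
        (b ^ 2 * γbarB) ^ ((a + 1) / 2) *
          ∫ y in Ioi (0:ℝ),
            (lowerGamma (a + 1) (Real.sqrt (y * Rt + (Rt - 1)) / (b * Real.sqrt γbarB)) /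
              Real.Gamma (a + 1)) * snrDensity a' b' γbarE y)
      atTop
      (nhds ((1 / Real.Gamma (a + 2)) *
        ∫ y in Ioi (0:ℝ),
          (y * Rt + (Rt - 1)) ^ ((a + 1) / 2) * snrDensity a' b' γbarE y)) := by
  have hs : (0:ℝ) < a + 1 := by linarith
  have hΓ1 : 0 < Real.Gamma (a + 1) := Real.Gamma_pos_of_pos hs
  have hΓ2eq : Real.Gamma (a + 2) = (a + 1) * Real.Gamma (a + 1) := by
    rw [show a + 2 = (a + 1) + 1 by ring]
    exact Real.Gamma_add_one hs.ne'
  have hΓ2 : 0 < Real.Gamma (a + 2) := by rw [hΓ2eq]; positivity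
  have hΓE : 0 < Real.Gamma (a' + 1) := Real.Gamma_pos_of_pos (by linarith)
  have hRt0 : (0:ℝ) < Rt := by linarith
  have hq0 : (0:ℝ) < (a + 1) / 2 := by linarith
  have hcE : (0:ℝ) < b' * Real.sqrt γbarE := by positivity
  have hKE : (0:ℝ) < 2 * γbarE ^ ((a' + 1) / 2) * b' ^ (a' + 1) * Real.Gamma (a' + 1) := by
    positivity
  have hdens_nonneg : ∀ y : ℝ, 0 ≤ y → 0 ≤ snrDensity a' b' γbarE y := fun y hy => by
    unfold snrDensity; positivity
  have hdens_meas : Measurable (snrDensity a' b' γbarE) := by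
    unfold snrDensity; fun_prop
  -- Part 1: integrability
  have hγt : ∀ y : ℝ, y ∈ Ioi (0:ℝ) → 0 < y * Rt + (Rt - 1) := fun y hy => by
    have hy0 : (0:ℝ) < y := hy
    nlinarith
  have hmeas_g : AEStronglyMeasurable
      (fun y => (y * Rt + (Rt - 1)) ^ ((a + 1) / 2) * snrDensity a' b' γbarE y)
      (volume.restrict (Ioi (0:ℝ))) := by
    apply Measurable.aestronglyMeasurable
    fun_prop
  have hp' : (-1:ℝ) < (a' - 1) / 2 := by linarith
  have hBint : IntegrableOn (fun y : ℝ =>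
      (2 * Rt) ^ ((a + 1) / 2) / (2 * γbarE ^ ((a' + 1) / 2) * b' ^ (a' + 1) *
        Real.Gamma (a' + 1)) *
        (y ^ ((a' - 1) / 2) * Real.exp (-(Real.sqrt y / (b' * Real.sqrt γbarE)))) +
      (2 * Rt) ^ ((a + 1) / 2) / (2 * γbarE ^ ((a' + 1) / 2) * b' ^ (a' + 1) *
        Real.Gamma (a' + 1)) *
        (y ^ ((a' - 1) / 2 + (a + 1) / 2) *
          Real.exp (-(Real.sqrt y / (b' * Real.sqrt γbarE))))) (Ioi (0:ℝ)) :=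
    ((aux1 hp' hcE).const_mul _).add ((aux1 (by linarith) hcE).const_mul _)
  have hgB : ∀ y : ℝ, y ∈ Ioi (0:ℝ) →
      (y * Rt + (Rt - 1)) ^ ((a + 1) / 2) * snrDensity a' b' γbarE y ≤
      (2 * Rt) ^ ((a + 1) / 2) / (2 * γbarE ^ ((a' + 1) / 2) * b' ^ (a' + 1) *
        Real.Gamma (a' + 1)) *
        (y ^ ((a' - 1) / 2) * Real.exp (-(Real.sqrt y / (b' * Real.sqrt γbarE)))) +
      (2 * Rt) ^ ((a + 1) / 2) / (2 * γbarE ^ ((a' + 1) / 2) * b' ^ (a' + 1) *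
        Real.Gamma (a' + 1)) *
        (y ^ ((a' - 1) / 2 + (a + 1) / 2) *
          Real.exp (-(Real.sqrt y / (b' * Real.sqrt γbarE)))) := by
    intro y hy
    have hy0 : (0:ℝ) < y := hy
    have h1 : y * Rt + (Rt - 1) ≤ 2 * Rt * max 1 y := by
      have hmy : y ≤ max 1 y := le_max_right _ _
      have h1y : (1:ℝ) ≤ max 1 y := le_max_left _ _
      nlinarith
    have h2 : (y * Rt + (Rt - 1)) ^ ((a + 1) / 2) ≤ (2 * Rt * max 1 y) ^ ((a + 1) / 2) :=
      Real.rpow_le_rpow (hγt y hy).le h1 hq0.le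
    have h3 : (2 * Rt * max 1 y) ^ ((a + 1) / 2)
        = (2 * Rt) ^ ((a + 1) / 2) * (max 1 y) ^ ((a + 1) / 2) :=
      Real.mul_rpow (by positivity) (by positivity)
    have h4 : (max 1 y) ^ ((a + 1) / 2) ≤ 1 + y ^ ((a + 1) / 2) := by
      rcases le_total y 1 with h | h
      · rw [max_eq_left h, Real.one_rpow]
        linarith [Real.rpow_nonneg hy0.le ((a + 1) / 2)]
      · rw [max_eq_right h]
        linarith
    have h5 : (y * Rt + (Rt - 1)) ^ ((a + 1) / 2)
        ≤ (2 * Rt) ^ ((a + 1) / 2) * (1 + y ^ ((a + 1) / 2)) := by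
      calc (y * Rt + (Rt - 1)) ^ ((a + 1) / 2) ≤ (2 * Rt * max 1 y) ^ ((a + 1) / 2) := h2
        _ = (2 * Rt) ^ ((a + 1) / 2) * (max 1 y) ^ ((a + 1) / 2) := h3
        _ ≤ (2 * Rt) ^ ((a + 1) / 2) * (1 + y ^ ((a + 1) / 2)) :=
            mul_le_mul_of_nonneg_left h4 (Real.rpow_nonneg (by positivity) _)
    have hsplit : y ^ ((a' - 1) / 2 + (a + 1) / 2)
        = y ^ ((a' - 1) / 2) * y ^ ((a + 1) / 2) := Real.rpow_add hy0 _ _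
    have hdnn : 0 ≤ y ^ ((a' - 1) / 2) *
        Real.exp (-(Real.sqrt y / (b' * Real.sqrt γbarE))) /
        (2 * γbarE ^ ((a' + 1) / 2) * b' ^ (a' + 1) * Real.Gamma (a' + 1)) := by positivity
    calc (y * Rt + (Rt - 1)) ^ ((a + 1) / 2) * snrDensity a' b' γbarE y
        ≤ (2 * Rt) ^ ((a + 1) / 2) * (1 + y ^ ((a + 1) / 2)) * snrDensity a' b' γbarE y := by
          exact mul_le_mul_of_nonneg_right h5 (hdens_nonneg y hy0.le)
      _ = (2 * Rt) ^ ((a + 1) / 2) / (2 * γbarE ^ ((a' + 1) / 2) * b' ^ (a' + 1) *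
            Real.Gamma (a' + 1)) *
            (y ^ ((a' - 1) / 2) * Real.exp (-(Real.sqrt y / (b' * Real.sqrt γbarE)))) +
          (2 * Rt) ^ ((a + 1) / 2) / (2 * γbarE ^ ((a' + 1) / 2) * b' ^ (a' + 1) *
            Real.Gamma (a' + 1)) *
            (y ^ ((a' - 1) / 2 + (a + 1) / 2) *
              Real.exp (-(Real.sqrt y / (b' * Real.sqrt γbarE)))) := by
          unfold snrDensity
          rw [hsplit]
          ring
  have part1 : IntegrableOn
      (fun y => (y * Rt + (Rt - 1)) ^ ((a + 1) / 2) * snrDensity a' b' γbarE y)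
      (Ioi (0:ℝ)) := by
    refine hBint.mono' hmeas_g ?_
    rw [ae_restrict_iff' measurableSet_Ioi]
    refine ae_of_all _ fun y hy => ?_
    rw [Real.norm_eq_abs, abs_of_nonneg
      (mul_nonneg (Real.rpow_nonneg (hγt y hy).le _) (hdens_nonneg y (le_of_lt hy)))]
    exact hgB y hy
  refine ⟨part1, ?_⟩
  -- Part 2: the limit
  have hHmono : Monotone (fun x : ℝ => lowerGamma (a + 1) (max 0 x)) := fun x y hxy =>
    lg_mono hs (le_max_left 0 x) (le_max_left 0 y) (max_le_max le_rfl hxy)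
  have hHmeas : Measurable (fun x : ℝ => lowerGamma (a + 1) (max 0 x)) := hHmono.measurable
  have hFmeas : ∀ u : ℝ, AEStronglyMeasurable
      (fun y => (b ^ 2 * u) ^ ((a + 1) / 2) *
        ((lowerGamma (a + 1) (Real.sqrt (y * Rt + (Rt - 1)) / (b * Real.sqrt u)) /
          Real.Gamma (a + 1)) * snrDensity a' b' γbarE y))
      (volume.restrict (Ioi (0:ℝ))) := by
    intro u
    have hXmeas : Measurable
        (fun y : ℝ => Real.sqrt (y * Rt + (Rt - 1)) / (b * Real.sqrt u)) := by fun_prop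
    have h1 : Measurable (fun y : ℝ =>
        lowerGamma (a + 1) (Real.sqrt (y * Rt + (Rt - 1)) / (b * Real.sqrt u))) := by
      have h2 := hHmeas.comp hXmeas
      have heq : (fun y : ℝ =>
          lowerGamma (a + 1) (max 0 (Real.sqrt (y * Rt + (Rt - 1)) / (b * Real.sqrt u))))
          = fun y : ℝ =>
          lowerGamma (a + 1) (Real.sqrt (y * Rt + (Rt - 1)) / (b * Real.sqrt u)) :=
        funext fun y => by
          rw [max_eq_right (div_nonneg (Real.sqrt_nonneg _)
            (mul_nonneg hb.le (Real.sqrt_nonneg _)))]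
      rw [← heq]
      exact h2
    exact (measurable_const.mul ((h1.div_const _).mul hdens_meas)).aestronglyMeasurable
  have hbound_int : Integrable (fun y : ℝ => (1 / Real.Gamma (a + 2)) *
      ((y * Rt + (Rt - 1)) ^ ((a + 1) / 2) * snrDensity a' b' γbarE y))
      (volume.restrict (Ioi (0:ℝ))) := part1.const_mul _
  have h_bound : ∀ᶠ u : ℝ in atTop, ∀ᵐ y ∂(volume.restrict (Ioi (0:ℝ))),
      ‖(b ^ 2 * u) ^ ((a + 1) / 2) *
        ((lowerGamma (a + 1) (Real.sqrt (y * Rt + (Rt - 1)) / (b * Real.sqrt u)) /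
          Real.Gamma (a + 1)) * snrDensity a' b' γbarE y)‖ ≤
      (1 / Real.Gamma (a + 2)) *
        ((y * Rt + (Rt - 1)) ^ ((a + 1) / 2) * snrDensity a' b' γbarE y) := by
    filter_upwards [eventually_gt_atTop (0:ℝ)] with u hu
    rw [ae_restrict_iff' measurableSet_Ioi]
    refine ae_of_all _ fun y hy => ?_
    have hγty := hγt y hy
    have hbu : (0:ℝ) < b * Real.sqrt u := by positivity
    have hX0 : (0:ℝ) ≤ Real.sqrt (y * Rt + (Rt - 1)) / (b * Real.sqrt u) := by positivity
    have hkey := (keylem hs hγty hbu).1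
    rw [← e1lem hb hu] at hkey
    have hF0 : 0 ≤ (b ^ 2 * u) ^ ((a + 1) / 2) *
        ((lowerGamma (a + 1) (Real.sqrt (y * Rt + (Rt - 1)) / (b * Real.sqrt u)) /
          Real.Gamma (a + 1)) * snrDensity a' b' γbarE y) := by
      have := lg_nonneg (s := a + 1) hX0
      have := hdens_nonneg y (le_of_lt hy)
      have h0 : (0:ℝ) ≤ (b ^ 2 * u) ^ ((a + 1) / 2) := Real.rpow_nonneg (by positivity) _
      positivity
    rw [Real.norm_eq_abs, abs_of_nonneg hF0]
    have hd := hdens_nonneg y (le_of_lt hy)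
    calc (b ^ 2 * u) ^ ((a + 1) / 2) *
        ((lowerGamma (a + 1) (Real.sqrt (y * Rt + (Rt - 1)) / (b * Real.sqrt u)) /
          Real.Gamma (a + 1)) * snrDensity a' b' γbarE y)
        = ((b ^ 2 * u) ^ ((a + 1) / 2) *
            lowerGamma (a + 1) (Real.sqrt (y * Rt + (Rt - 1)) / (b * Real.sqrt u))) *
          (snrDensity a' b' γbarE y / Real.Gamma (a + 1)) := by ring
      _ ≤ ((y * Rt + (Rt - 1)) ^ ((a + 1) / 2) / (a + 1)) *
          (snrDensity a' b' γbarE y / Real.Gamma (a + 1)) :=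
          mul_le_mul_of_nonneg_right hkey (div_nonneg hd hΓ1.le)
      _ = (1 / Real.Gamma (a + 2)) *
          ((y * Rt + (Rt - 1)) ^ ((a + 1) / 2) * snrDensity a' b' γbarE y) := by
          rw [hΓ2eq]
          field_simp
  have h_lim : ∀ᵐ y ∂(volume.restrict (Ioi (0:ℝ))),
      Tendsto (fun u : ℝ => (b ^ 2 * u) ^ ((a + 1) / 2) *
        ((lowerGamma (a + 1) (Real.sqrt (y * Rt + (Rt - 1)) / (b * Real.sqrt u)) /
          Real.Gamma (a + 1)) * snrDensity a' b' γbarE y)) atTop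
        (nhds ((1 / Real.Gamma (a + 2)) *
          ((y * Rt + (Rt - 1)) ^ ((a + 1) / 2) * snrDensity a' b' γbarE y))) := by
    rw [ae_restrict_iff' measurableSet_Ioi]
    refine ae_of_all _ fun y hy => ?_
    have hγty := hγt y hy
    have hsqrt_top : Tendsto (fun u : ℝ => Real.sqrt u) atTop atTop := by
      have h := tendsto_rpow_atTop (show (0:ℝ) < 1/2 by norm_num)
      refine h.congr fun u => (Real.sqrt_eq_rpow u).symm
    have hXlim : Tendsto (fun u : ℝ =>
        Real.sqrt (y * Rt + (Rt - 1)) / (b * Real.sqrt u)) atTop (nhds 0) := by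
      have h2 : Tendsto (fun u : ℝ => (Real.sqrt u)⁻¹) atTop (nhds 0) :=
        hsqrt_top.inv_tendsto_atTop
      have h3 := h2.const_mul (Real.sqrt (y * Rt + (Rt - 1)) / b)
      rw [mul_zero] at h3
      refine h3.congr fun u => ?_
      rw [← div_eq_mul_inv, div_div]
    have hexp : Tendsto (fun u : ℝ =>
        Real.exp (-(Real.sqrt (y * Rt + (Rt - 1)) / (b * Real.sqrt u))) *
          ((y * Rt + (Rt - 1)) ^ ((a + 1) / 2) / (a + 1))) atTop
        (nhds ((y * Rt + (Rt - 1)) ^ ((a + 1) / 2) / (a + 1))) := by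
      have h4 : Tendsto (fun u : ℝ =>
          Real.exp (-(Real.sqrt (y * Rt + (Rt - 1)) / (b * Real.sqrt u)))) atTop
          (nhds 1) := by
        have hneg := hXlim.neg
        rw [neg_zero] at hneg
        have h5 := (Real.continuous_exp.tendsto 0).comp hneg
        simp only [Real.exp_zero] at h5
        exact h5
      have h6 := h4.mul_const ((y * Rt + (Rt - 1)) ^ ((a + 1) / 2) / (a + 1))
      rw [one_mul] at h6
      exact h6
    have hG : Tendsto (fun u : ℝ => (b ^ 2 * u) ^ ((a + 1) / 2) *
        lowerGamma (a + 1) (Real.sqrt (y * Rt + (Rt - 1)) / (b * Real.sqrt u))) atTop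
        (nhds ((y * Rt + (Rt - 1)) ^ ((a + 1) / 2) / (a + 1))) := by
      refine tendsto_of_tendsto_of_tendsto_of_le_of_le' hexp tendsto_const_nhds ?_ ?_
      · filter_upwards [eventually_gt_atTop (0:ℝ)] with u hu
        have hbu : (0:ℝ) < b * Real.sqrt u := by positivity
        have h := (keylem hs hγty hbu).2
        rw [← e1lem hb hu] at h
        exact h
      · filter_upwards [eventually_gt_atTop (0:ℝ)] with u hu
        have hbu : (0:ℝ) < b * Real.sqrt u := by positivity
        have h := (keylem hs hγty hbu).1
        rw [← e1lem hb hu] at h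
        exact h
    have h7 := hG.mul_const (snrDensity a' b' γbarE y / Real.Gamma (a + 1))
    have h8 : (y * Rt + (Rt - 1)) ^ ((a + 1) / 2) / (a + 1) *
        (snrDensity a' b' γbarE y / Real.Gamma (a + 1)) =
        (1 / Real.Gamma (a + 2)) *
        ((y * Rt + (Rt - 1)) ^ ((a + 1) / 2) * snrDensity a' b' γbarE y) := by
      rw [hΓ2eq]
      field_simp
    rw [h8] at h7
    refine h7.congr fun u => ?_
    ring
  have hDCT := tendsto_integral_filter_of_dominated_convergence
    (μ := volume.restrict (Ioi (0:ℝ)))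
    (F := fun u : ℝ => fun y : ℝ => (b ^ 2 * u) ^ ((a + 1) / 2) *
      ((lowerGamma (a + 1) (Real.sqrt (y * Rt + (Rt - 1)) / (b * Real.sqrt u)) /
        Real.Gamma (a + 1)) * snrDensity a' b' γbarE y))
    (f := fun y : ℝ => (1 / Real.Gamma (a + 2)) *
      ((y * Rt + (Rt - 1)) ^ ((a + 1) / 2) * snrDensity a' b' γbarE y))
    (fun y : ℝ => (1 / Real.Gamma (a + 2)) *
      ((y * Rt + (Rt - 1)) ^ ((a + 1) / 2) * snrDensity a' b' γbarE y))
    (Eventually.of_forall hFmeas) h_bound hbound_int h_lim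
  have heq2 : (∫ y in Ioi (0:ℝ), (1 / Real.Gamma (a + 2)) *
      ((y * Rt + (Rt - 1)) ^ ((a + 1) / 2) * snrDensity a' b' γbarE y)) =
      (1 / Real.Gamma (a + 2)) *
      ∫ y in Ioi (0:ℝ), (y * Rt + (Rt - 1)) ^ ((a + 1) / 2) * snrDensity a' b' γbarE y :=
    integral_const_mul _ _
  rw [heq2] at hDCT
  refine hDCT.congr fun u => ?_
  exact integral_const_mul _ _
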